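/- Let $n$ be a positive odd integer, let $a$ be an integer with $\gcd(a(a+1), n) = 1$, and let $q$ be a positive real number with $q \neq 1$. Let $Q$ be the $n \times n$ real matrix whose $(j,k)$-entry (for $1 \le j,k \le n$) is $q^{-\{(aj-(a+1)k)/n\}}$, where $\{x\}$ is the fractional part and the power is a real power of $q$. Then $Q$ is invertible, and its inverse is $\frac{1}{1-q^{-1}}[f(j,k)]_{1 \le j,k \le n}$, where $f(j,k) = [\![\, n \mid (a+1)j - ak \,]\!] - q^{-1/n}[\![\, n \mid (a+1)j - ak - 1 \,]\!]$ and $[\![ S ]\!]$ equals $1$ if statement $S$ holds and $0$ otherwise. -/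
import Mathlib

private lemma aux_exists_unique (n : ℕ) (hn : 0 < n) (c t : ℤ) (hc : IsCoprime c (n : ℤ)) :
    ∃! k : Fin n, (n : ℤ) ∣ c * ((k : ℕ) + 1) - t := by
  obtain ⟨u, v, huv⟩ := hc
  have hn' : (0 : ℤ) < n := by exact_mod_cast hn
  set K : ℤ := (u * t - 1) % n with hK
  have hK0 : 0 ≤ K := Int.emod_nonneg _ hn'.ne'
  have hK1 : K < n := Int.emod_lt_of_pos _ hn'
  have hdvd : (n : ℤ) ∣ c * (((K.toNat : ℕ) : ℤ) + 1) - t := by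
    have hKe : ((K.toNat : ℕ) : ℤ) = K := Int.toNat_of_nonneg hK0
    have h1 : K = (u * t - 1) - n * ((u * t - 1) / n) := by rw [hK, Int.emod_def]
    refine ⟨-v * t - c * ((u * t - 1) / n), ?_⟩
    rw [hKe]
    linear_combination c * h1 + t * huv
  refine ⟨⟨K.toNat, by omega⟩, hdvd, ?_⟩
  rintro k hk
  have hsub : (n : ℤ) ∣ c * (((k : ℕ) : ℤ) - ((K.toNat : ℕ) : ℤ)) := by
    have h2 := dvd_sub hk hdvd
    have e : c * (((k : ℕ) : ℤ) + 1) - t - (c * (((K.toNat : ℕ) : ℤ) + 1) - t)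
        = c * (((k : ℕ) : ℤ) - ((K.toNat : ℕ) : ℤ)) := by ring
    rwa [e] at h2
  have hdv : (n : ℤ) ∣ (((k : ℕ) : ℤ) - ((K.toNat : ℕ) : ℤ)) := by
    have h2 : (n : ℤ) ∣ u * (c * (((k : ℕ) : ℤ) - ((K.toNat : ℕ) : ℤ))) := hsub.mul_left u
    have e : (((k : ℕ) : ℤ) - ((K.toNat : ℕ) : ℤ))
        = u * (c * (((k : ℕ) : ℤ) - ((K.toNat : ℕ) : ℤ)))
          + n * (v * (((k : ℕ) : ℤ) - ((K.toNat : ℕ) : ℤ))) := by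
      linear_combination (((k : ℕ) : ℤ) - ((K.toNat : ℕ) : ℤ)) * huv.symm
    rw [e]
    exact dvd_add h2 (Dvd.intro _ rfl)
  have hk_lt := k.isLt
  have hKt : K.toNat < n := by omega
  have hz := Int.eq_zero_of_abs_lt_dvd hdv (by rw [abs_lt]; constructor <;> push_cast <;> omega)
  exact Fin.ext (show (k : ℕ) = K.toNat by omega)

theorem inv_q_rpow_neg_fract (n : ℕ) (hn : 0 < n) (hodd : Odd n) (a : ℤ)
    (hcop : Int.gcd (a * (a + 1)) n = 1)
    (q : ℝ) (hq0 : 0 < q) (hq1 : q ≠ 1) :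
    (Matrix.of fun j k : Fin n =>
        q ^ (-Int.fract (((a * ((j : ℕ) + 1) - (a + 1) * ((k : ℕ) + 1) : ℤ) : ℝ) / (n : ℝ)))) *
      (Matrix.of fun j k : Fin n =>
        (1 / (1 - q⁻¹)) *
          ((if (n : ℤ) ∣ (a + 1) * ((j : ℕ) + 1) - a * ((k : ℕ) + 1) then (1 : ℝ) else 0) -
            q ^ (-(1 / (n : ℝ))) *
              (if (n : ℤ) ∣ (a + 1) * ((j : ℕ) + 1) - a * ((k : ℕ) + 1) - 1 then (1 : ℝ) else 0))) = 1 ∧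
    (Matrix.of fun j k : Fin n =>
        (1 / (1 - q⁻¹)) *
          ((if (n : ℤ) ∣ (a + 1) * ((j : ℕ) + 1) - a * ((k : ℕ) + 1) then (1 : ℝ) else 0) -
            q ^ (-(1 / (n : ℝ))) *
              (if (n : ℤ) ∣ (a + 1) * ((j : ℕ) + 1) - a * ((k : ℕ) + 1) - 1 then (1 : ℝ) else 0))) *
      (Matrix.of fun j k : Fin n =>
        q ^ (-Int.fract (((a * ((j : ℕ) + 1) - (a + 1) * ((k : ℕ) + 1) : ℤ) : ℝ) / (n : ℝ)))) = 1 := by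
  have hnR : (n : ℝ) ≠ 0 := Nat.cast_ne_zero.mpr hn.ne'
  have hnZ : (0 : ℤ) < n := by exact_mod_cast hn
  have hcop' : IsCoprime (a * (a + 1)) (n : ℤ) := Int.isCoprime_iff_gcd_eq_one.mpr hcop
  have hca : IsCoprime a (n : ℤ) := hcop'.of_mul_left_left
  have hca1 : IsCoprime (a + 1) (n : ℤ) := hcop'.of_mul_left_right
  have hqinv : (1 : ℝ) - q⁻¹ ≠ 0 := sub_ne_zero_of_ne (fun h => hq1 (by
    rw [← inv_inv q, ← h, inv_one]))
  suffices h : (Matrix.of fun j k : Fin n =>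
      q ^ (-Int.fract (((a * ((j : ℕ) + 1) - (a + 1) * ((k : ℕ) + 1) : ℤ) : ℝ) / (n : ℝ)))) *
      (Matrix.of fun j k : Fin n =>
        (1 / (1 - q⁻¹)) *
          ((if (n : ℤ) ∣ (a + 1) * ((j : ℕ) + 1) - a * ((k : ℕ) + 1) then (1 : ℝ) else 0) -
            q ^ (-(1 / (n : ℝ))) *
              (if (n : ℤ) ∣ (a + 1) * ((j : ℕ) + 1) - a * ((k : ℕ) + 1) - 1 then (1 : ℝ) else 0))) = 1 by
    exact ⟨h, mul_eq_one_comm.mp h⟩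
  ext j l
  rw [Matrix.mul_apply]
  obtain ⟨k0, hk0, hk0u⟩ := aux_exists_unique n hn (a + 1) (a * ((l : ℕ) + 1)) hca1
  obtain ⟨k1, hk1, hk1u⟩ := aux_exists_unique n hn (a + 1) (a * ((l : ℕ) + 1) + 1) hca1
  have hif0 : ∀ k : Fin n,
      (if (n : ℤ) ∣ (a + 1) * ((k : ℕ) + 1) - a * ((l : ℕ) + 1) then (1 : ℝ) else 0)
        = if k = k0 then 1 else 0 :=
    fun k => if_congr ⟨hk0u k, fun h => h ▸ hk0⟩ rfl rfl
  have hif1 : ∀ k : Fin n,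
      (if (n : ℤ) ∣ (a + 1) * ((k : ℕ) + 1) - a * ((l : ℕ) + 1) - 1 then (1 : ℝ) else 0)
        = if k = k1 then 1 else 0 := by
    intro k
    refine if_congr ?_ rfl rfl
    rw [sub_sub]
    exact ⟨hk1u k, fun h => h ▸ hk1⟩
  simp only [Matrix.of_apply, Matrix.one_apply, hif0, hif1]
  simp only [Int.fract_div_intCast_eq_div_intCast_mod, mul_sub, mul_ite, mul_one, mul_zero,
    Finset.sum_sub_distrib, Finset.sum_ite_eq', Finset.mem_univ, if_true]
  have hm0 : (a * ((j : ℕ) + 1) - (a + 1) * ((k0 : ℕ) + 1)) % (n : ℤ)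
      = (a * (((j : ℕ) : ℤ) - ((l : ℕ) : ℤ))) % (n : ℤ) := by
    have hd : (n : ℤ) ∣ a * (((j : ℕ) : ℤ) - ((l : ℕ) : ℤ))
        - (a * ((j : ℕ) + 1) - (a + 1) * ((k0 : ℕ) + 1)) := by
      have e : a * (((j : ℕ) : ℤ) - ((l : ℕ) : ℤ))
          - (a * ((j : ℕ) + 1) - (a + 1) * ((k0 : ℕ) + 1))
          = (a + 1) * ((k0 : ℕ) + 1) - a * ((l : ℕ) + 1) := by ring
      rw [e]; exact hk0
    exact Int.modEq_iff_dvd.mpr hd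
  have hm1 : (a * ((j : ℕ) + 1) - (a + 1) * ((k1 : ℕ) + 1)) % (n : ℤ)
      = (a * (((j : ℕ) : ℤ) - ((l : ℕ) : ℤ)) - 1) % (n : ℤ) := by
    have hd : (n : ℤ) ∣ (a * (((j : ℕ) : ℤ) - ((l : ℕ) : ℤ)) - 1)
        - (a * ((j : ℕ) + 1) - (a + 1) * ((k1 : ℕ) + 1)) := by
      have e : (a * (((j : ℕ) : ℤ) - ((l : ℕ) : ℤ)) - 1)
          - (a * ((j : ℕ) + 1) - (a + 1) * ((k1 : ℕ) + 1))
          = (a + 1) * ((k1 : ℕ) + 1) - (a * ((l : ℕ) + 1) + 1) := by ring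
      rw [e]; exact hk1
    exact Int.modEq_iff_dvd.mpr hd
  rw [hm0, hm1]
  set x : ℤ := a * (((j : ℕ) : ℤ) - ((l : ℕ) : ℤ)) with hx
  by_cases hjl : j = l
  · subst hjl
    have hx0 : x = 0 := by rw [hx]; ring
    have hr1' : (x - 1) % (n : ℤ) = (n : ℤ) - 1 := by
      rw [hx0, show ((0 : ℤ) - 1) = ((n : ℤ) - 1) + (n : ℤ) * (-1) by ring,
        Int.add_mul_emod_self_left]
      exact Int.emod_eq_of_lt (by omega) (by omega)
    rw [hr1', hx0, if_pos rfl]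
    have e0 : ((0 : ℤ) % (n : ℤ)) = 0 := by simp
    rw [e0]
    norm_num
    have key : q ^ (-(((n : ℝ) - 1) / (n : ℝ))) * q ^ (-((n : ℝ))⁻¹) = q⁻¹ := by
      rw [← Real.rpow_add hq0, ← Real.rpow_neg_one q]
      congr 1
      field_simp
      ring
    have hfin : (1 - q⁻¹)⁻¹ * (1 - q⁻¹) = 1 := inv_mul_cancel₀ hqinv
    linear_combination (-(1 - q⁻¹)⁻¹) * key + hfin
  · have hxnd : ¬ (n : ℤ) ∣ x := by
      intro hdvd
      have h1 : (n : ℤ) ∣ (((j : ℕ) : ℤ) - ((l : ℕ) : ℤ)) :=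
        (hca.symm).dvd_of_dvd_mul_left (hx ▸ hdvd)
      have hjlt := j.isLt
      have hllt := l.isLt
      have hz := Int.eq_zero_of_abs_lt_dvd h1
        (by rw [abs_lt]; constructor <;> push_cast <;> omega)
      exact hjl (Fin.ext (show (j : ℕ) = (l : ℕ) by omega))
    have hr0nonneg : 0 ≤ x % (n : ℤ) := Int.emod_nonneg _ hnZ.ne'
    have hr0lt : x % (n : ℤ) < n := Int.emod_lt_of_pos _ hnZ
    have hr0ne : x % (n : ℤ) ≠ 0 := fun h => hxnd (Int.dvd_of_emod_eq_zero h)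
    have hxr0 : x % (n : ℤ) = (x % (n : ℤ)) % (n : ℤ) :=
      (Int.emod_emod_of_dvd x (dvd_refl (n : ℤ))).symm
    have hr1' : (x - 1) % (n : ℤ) = x % (n : ℤ) - 1 := by
      have h1 : (x - 1) % (n : ℤ) = (x % (n : ℤ) - 1) % (n : ℤ) :=
        Int.ModEq.sub_right 1 hxr0
      rw [h1]
      exact Int.emod_eq_of_lt (by omega) (by omega)
    rw [hr1', if_neg hjl]
    have key : q ^ (-(((x % (n : ℤ) - 1 : ℤ) : ℝ) / (n : ℝ))) * q ^ (-(1 / (n : ℝ)))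
        = q ^ (-(((x % (n : ℤ) : ℤ) : ℝ) / (n : ℝ))) := by
      rw [← Real.rpow_add hq0]
      congr 1
      push_cast
      field_simp
      ring
    linear_combination (-(1 / (1 - q⁻¹))) * key
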